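/- Let G be a finite simple graph that is locally bipartite and contains a copy of H₀. Then δ(G) ≤ (4/7)·|G|. -/
import Mathlib


open SimpleGraph

/-- A finite simple graph is *locally bipartite* if each neighbourhood induces a
bipartite (equivalently, 2-colourable) graph. -/
def LocallyBipartite {V : Type*} (G : SimpleGraph V) : Prop :=
  ∀ v : V, (G.induce (G.neighborSet v)).Colorable 2

/-- `C̄₇`, the complement of the 7-cycle: `i` and `j` are adjacent iff they differ by
`±2` or `±3` modulo 7. -/
def C7bar : SimpleGraph (ZMod 7) :=
  SimpleGraph.fromRel (fun i j => j = i + 2 ∨ j = i + 3)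

/-- `H₀`, the Moser spindle: the 7-cycle `v₀v₁…v₆` together with the edges
`v₀v₂`, `v₀v₅`, `v₁v₃`, `v₄v₆`. -/
def H0 : SimpleGraph (ZMod 7) :=
  SimpleGraph.fromRel (fun i j =>
    j = i + 1 ∨ (i = 0 ∧ j = 2) ∨ (i = 0 ∧ j = 5) ∨ (i = 1 ∧ j = 3) ∨ (i = 4 ∧ j = 6))

/-- `H₁`: the 7-cycle `v₀v₁…v₆` together with the edges
`v₃v₅`, `v₅v₀`, `v₀v₂`, `v₂v₄`, `v₆v₁`. -/
def H1 : SimpleGraph (ZMod 7) :=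
  SimpleGraph.fromRel (fun i j =>
    j = i + 1 ∨ (i = 3 ∧ j = 5) ∨ (i = 5 ∧ j = 0) ∨ (i = 0 ∧ j = 2) ∨
      (i = 2 ∧ j = 4) ∨ (i = 6 ∧ j = 1))

/-- `H₂`: the 7-cycle `v₀v₁…v₆` together with the edges
`v₁v₃`, `v₃v₅`, `v₅v₀`, `v₀v₂`, `v₂v₄`, `v₄v₆`. -/
def H2 : SimpleGraph (ZMod 7) :=
  SimpleGraph.fromRel (fun i j =>
    j = i + 1 ∨ (i = 1 ∧ j = 3) ∨ (i = 3 ∧ j = 5) ∨ (i = 5 ∧ j = 0) ∨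
      (i = 0 ∧ j = 2) ∨ (i = 2 ∧ j = 4) ∨ (i = 4 ∧ j = 6))

/-- `H₂⁺`: the graph `H₂` (on the `some` vertices) together with an extra vertex
(`none`) joined to exactly `v₀`, `v₂` and `v₅`. -/
def H2plus : SimpleGraph (Option (ZMod 7)) :=
  SimpleGraph.fromRel (fun a b =>
    match a, b with
    | some i, some j =>
        j = i + 1 ∨ (i = 1 ∧ j = 3) ∨ (i = 3 ∧ j = 5) ∨ (i = 5 ∧ j = 0) ∨
          (i = 0 ∧ j = 2) ∨ (i = 2 ∧ j = 4) ∨ (i = 4 ∧ j = 6)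
    | none, some j => j = 0 ∨ j = 2 ∨ j = 5
    | _, _ => False)

/-- A graph `G` contains a copy of `H` if there is an injective graph homomorphism
from `H` to `G`, i.e. `G` has a (not necessarily induced) subgraph isomorphic to `H`. -/
def ContainsCopy {W V : Type*} (H : SimpleGraph W) (G : SimpleGraph V) : Prop :=
  ∃ f : H →g G, Function.Injective f

/-- A pair of vertices `u, v` is *dense* if the common neighbourhood of `u` and `v`
contains an edge. -/
def DensePair {V : Type*} (G : SimpleGraph V) (u v : V) : Prop :=
  ∃ x y : V, G.Adj u x ∧ G.Adj v x ∧ G.Adj u y ∧ G.Adj v y ∧ G.Adj x y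

/-- A pair of distinct vertices `u, v` is *sparse* if `u` and `v` are not adjacent and
the common neighbourhood of `u` and `v` contains no edge. -/
def SparsePair {V : Type*} (G : SimpleGraph V) (u v : V) : Prop :=
  u ≠ v ∧ ¬ G.Adj u v ∧ ¬ DensePair G u v

/-- A set of vertices is independent if it contains no edge. -/
def IsIndepSet {V : Type*} (G : SimpleGraph V) (s : Set V) : Prop :=
  ∀ ⦃u⦄, u ∈ s → ∀ ⦃v⦄, v ∈ s → ¬ G.Adj u v

instance : DecidableRel H0.Adj := fun a b =>
  decidable_of_iff _ (SimpleGraph.fromRel_adj _ a b).symm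

lemma H0_indep : ∀ i j k : ZMod 7, i ≠ j → i ≠ k → j ≠ k →
    H0.Adj i j ∨ H0.Adj i k ∨ H0.Adj j k := by decide

lemma indep_card_le {s : Finset (ZMod 7)}
    (hs : ∀ i ∈ s, ∀ j ∈ s, ¬ H0.Adj i j) : s.card ≤ 2 := by
  by_contra h
  push_neg at h
  obtain ⟨a, b, c, ha, hb, hc, hab, hac, hbc⟩ := Finset.two_lt_card_iff.mp h
  rcases H0_indep a b c hab hac hbc with h1 | h1 | h1
  · exact hs a ha b hb h1
  · exact hs a ha c hc h1
  · exact hs b hb c hc h1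

/-- A locally bipartite graph containing a copy of the Moser spindle `H₀` has minimum
degree at most `4/7·|G|`. -/
theorem locallyBipartite_contains_H0_minDegree_le {V : Type} [Fintype V]
    (G : SimpleGraph V) [DecidableRel G.Adj]
    (hLB : LocallyBipartite G)
    (hH0 : ContainsCopy H0 G) :
    (G.minDegree : ℝ) ≤ (4 / 7 : ℝ) * (Fintype.card V : ℝ) := by
  obtain ⟨f, -⟩ := hH0
  -- every vertex has at most 4 neighbours among the images f i
  have key : ∀ x : V,
      (Finset.univ.filter (fun i : ZMod 7 => G.Adj x (f i))).card ≤ 4 := by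
    intro x
    obtain ⟨c⟩ := hLB x
    set T : Finset (ZMod 7) := Finset.univ.filter (fun i => G.Adj x (f i)) with hT
    have hmem : ∀ i ∈ T, G.Adj x (f i) := by
      intro i hi; simpa [hT] using hi
    classical
    set g : ZMod 7 → Fin 2 := fun i =>
      if h : G.Adj x (f i) then c ⟨f i, h⟩ else 0 with hg
    have hcol : ∀ i ∈ T, ∀ j ∈ T, g i = g j → ¬ H0.Adj i j := by
      intro i hi j hj hgij hadj
      have hfi := hmem i hi
      have hfj := hmem j hj
      have hG : G.Adj (f i) (f j) := f.map_adj hadj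
      have hGind : (G.induce (G.neighborSet x)).Adj ⟨f i, hfi⟩ ⟨f j, hfj⟩ := hG
      have := c.valid hGind
      simp only [hg, dif_pos hfi, dif_pos hfj] at hgij
      exact this hgij
    have h0 : (T.filter (fun i => g i = 0)).card ≤ 2 := by
      apply indep_card_le
      intro i hi j hj
      simp only [Finset.mem_filter] at hi hj
      exact hcol i hi.1 j hj.1 (hi.2.trans hj.2.symm)
    have h1 : (T.filter (fun i => ¬ g i = 0)).card ≤ 2 := by
      apply indep_card_le
      intro i hi j hj
      simp only [Finset.mem_filter] at hi hj
      have : g i = g j := by omega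
      exact hcol i hi.1 j hj.1 this
    have := Finset.card_filter_add_card_filter_not (s := T)
      (p := fun i => g i = 0)
    omega
  -- double counting
  have hdeg : ∀ v : V, G.degree v = (Finset.univ.filter (fun x => G.Adj v x)).card := by
    intro v
    rw [← SimpleGraph.card_neighborFinset_eq_degree]
    congr 1
    ext x
    simp
  have hsum : ∑ i : ZMod 7, G.degree (f i) ≤ 4 * Fintype.card V := by
    calc ∑ i : ZMod 7, G.degree (f i)
        = ∑ i : ZMod 7, ∑ x : V, (if G.Adj (f i) x then 1 else 0) := by
          refine Finset.sum_congr rfl fun i _ => ?_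
          rw [hdeg, Finset.card_filter]
      _ = ∑ x : V, ∑ i : ZMod 7, (if G.Adj x (f i) then 1 else 0) := by
          rw [Finset.sum_comm]
          simp [adj_comm]
      _ = ∑ x : V, (Finset.univ.filter (fun i : ZMod 7 => G.Adj x (f i))).card := by
          refine Finset.sum_congr rfl fun x _ => ?_
          rw [Finset.card_filter]
      _ ≤ ∑ _x : V, 4 := Finset.sum_le_sum (fun x _ => key x)
      _ = 4 * Fintype.card V := by simp [mul_comm]
  have hmin : 7 * G.minDegree ≤ ∑ i : ZMod 7, G.degree (f i) := by
    have : ∀ i : ZMod 7, G.minDegree ≤ G.degree (f i) :=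
      fun i => G.minDegree_le_degree (f i)
    calc 7 * G.minDegree = ∑ _i : ZMod 7, G.minDegree := by
          simp [ZMod.card]
      _ ≤ ∑ i : ZMod 7, G.degree (f i) := Finset.sum_le_sum (fun i _ => this i)
  have h7 : 7 * G.minDegree ≤ 4 * Fintype.card V := le_trans hmin hsum
  have := (Nat.cast_le (α := ℝ)).mpr h7
  push_cast at this
  linarith
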